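/- arXiv:1506.06198 — 2 statements merged into one kernel-verified Lean document; each statement's English description precedes it below -/
import Mathlib

section
/- Let λ_1, …, λ_{12} be complex numbers of modulus 1, and define η_g(τ) = q·∏_{n≥1}∏_{i=1}^{12}(1−λ_i^{-1}q^n)(1−λ_i q^n) and η_{-g}(τ) = q·∏_{n≥1}∏_{i=1}^{12}(1+λ_i^{-1}q^n)(1+λ_i q^n), and set t_g(τ) = η_g(τ)/η_g(2τ) and t_{-g}(τ) = η_{-g}(τ)/η_{-g}(2τ). Then for all τ in the complex upper half-plane ℍ one has t_g(τ + 1/2) = −t_{-g}(τ). -/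
noncomputable section

open Complex

/-- `2πi`. -/
def twoPiI : ℂ := 2 * Real.pi * Complex.I

/-- `q = e^{2πiτ}`. -/
def qq (τ : ℂ) : ℂ := Complex.exp (twoPiI * τ)

/-- `y = e^{2πiz}`. -/
def yy (z : ℂ) : ℂ := Complex.exp (twoPiI * z)

/-- Jacobi theta function `ϑ₁`. -/
def th1 (τ z : ℂ) : ℂ :=
  -Complex.I * ∑' n : ℤ, (-1 : ℂ) ^ n *
    Complex.exp (twoPiI * (((n : ℂ) + 1/2) * z + ((n : ℂ) + 1/2) ^ 2 / 2 * τ))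

/-- Jacobi theta function `ϑ₂`. -/
def th2 (τ z : ℂ) : ℂ :=
  ∑' n : ℤ, Complex.exp (twoPiI * (((n : ℂ) + 1/2) * z + ((n : ℂ) + 1/2) ^ 2 / 2 * τ))

/-- Jacobi theta function `ϑ₃`. -/
def th3 (τ z : ℂ) : ℂ :=
  ∑' n : ℤ, Complex.exp (twoPiI * ((n : ℂ) * z + (n : ℂ) ^ 2 / 2 * τ))

/-- Jacobi theta function `ϑ₄`. -/
def th4 (τ z : ℂ) : ℂ :=
  ∑' n : ℤ, (-1 : ℂ) ^ n * Complex.exp (twoPiI * ((n : ℂ) * z + (n : ℂ) ^ 2 / 2 * τ))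

/-- The Dedekind eta function `η(τ) = q^{1/24} ∏_{n≥1} (1 - qⁿ)`. -/
def etaF (τ : ℂ) : ℂ :=
  Complex.exp (twoPiI * τ / 24) * ∏' n : ℕ, (1 - qq τ ^ (n + 1))

/-- The quasimodular Eisenstein series `E₂(τ) = 1 - 24 ∑_{n≥1} σ₁(n) qⁿ`. -/
def E2 (τ : ℂ) : ℂ :=
  1 - 24 * ∑' n : ℕ, (∑ d ∈ Nat.divisors (n + 1), (d : ℂ)) * qq τ ^ (n + 1)

/-- `Λ_N(τ) = (N/24)(N E₂(Nτ) - E₂(τ))`. -/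
def Lam (N : ℕ) (τ : ℂ) : ℂ := (N : ℂ) / 24 * ((N : ℂ) * E2 ((N : ℂ) * τ) - E2 τ)

/-- The weak Jacobi form `φ_{0,1}`. -/
def phi01 (τ z : ℂ) : ℂ :=
  4 * (th2 τ z ^ 2 / th2 τ 0 ^ 2 + th3 τ z ^ 2 / th3 τ 0 ^ 2 + th4 τ z ^ 2 / th4 τ 0 ^ 2)

/-- The weak Jacobi form `φ_{-2,1}`. -/
def phim21 (τ z : ℂ) : ℂ := -(th1 τ z ^ 2) / etaF τ ^ 6

/-- `η_g(τ) = q·∏_{n≥1}∏_{i=1}^{12}(1−λᵢ⁻¹qⁿ)(1−λᵢqⁿ)`. -/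
def etaG12 (lam : Fin 12 → ℂ) (τ : ℂ) : ℂ :=
  qq τ * ∏' n : ℕ, ∏ i, ((1 - (lam i)⁻¹ * qq τ ^ (n + 1)) * (1 - lam i * qq τ ^ (n + 1)))

/-- `η_{-g}(τ) = q·∏_{n≥1}∏_{i=1}^{12}(1+λᵢ⁻¹qⁿ)(1+λᵢqⁿ)`. -/
def etaG12neg (lam : Fin 12 → ℂ) (τ : ℂ) : ℂ :=
  qq τ * ∏' n : ℕ, ∏ i, ((1 + (lam i)⁻¹ * qq τ ^ (n + 1)) * (1 + lam i * qq τ ^ (n + 1)))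

/-- `t_g(τ) = η_g(τ)/η_g(2τ)`. -/
def tg12 (lam : Fin 12 → ℂ) (τ : ℂ) : ℂ := etaG12 lam τ / etaG12 lam (2 * τ)

/-- `t_{-g}(τ) = η_{-g}(τ)/η_{-g}(2τ)`. -/
def tg12neg (lam : Fin 12 → ℂ) (τ : ℂ) : ℂ := etaG12neg lam τ / etaG12neg lam (2 * τ)

lemma aux_summable_log {u : ℕ → ℂ} (hu : Summable u) (h1 : ∀ n, ‖u n‖ < 1) :
    Summable fun n => Complex.log (1 - u n) := by
  apply Summable.of_norm_bounded_eventually_nat (g := fun n => 3/2 * ‖u n‖)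
    (hu.norm.mul_left (3/2))
  have h0 : Filter.Tendsto (fun n => ‖u n‖) Filter.atTop (nhds 0) := by simpa using hu.tendsto_atTop_zero.norm
  have h2 : ∀ᶠ n in Filter.atTop, ‖u n‖ ≤ 1/2 :=
    h0.eventually_le_const (by norm_num)
  filter_upwards [h2] with n hn
  have he : (1 : ℂ) - u n = 1 + (-u n) := by ring
  rw [he]
  calc ‖Complex.log (1 + -u n)‖ ≤ 3/2 * ‖-u n‖ :=
        Complex.norm_log_one_add_half_le_self (by simpa using hn)
    _ = 3/2 * ‖u n‖ := by rw [norm_neg]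

lemma aux_mult_ne {u : ℕ → ℂ} (hu : Summable u) (h1 : ∀ n, ‖u n‖ < 1) :
    Multipliable (fun n => 1 - u n) ∧ (∏' n, (1 - u n)) ≠ 0 := by
  have hne : ∀ n, (1:ℂ) - u n ≠ 0 := by
    intro n h
    have hu1 : u n = 1 := by linear_combination -h
    have := h1 n
    rw [hu1] at this
    simpa using this
  have hlog := aux_summable_log hu h1
  have hm := Complex.multipliable_of_summable_log hlog
  refine ⟨hm, ?_⟩
  have h2 := Complex.cexp_tsum_eq_tprod hne hlog
  intro h
  exact Complex.exp_ne_zero _ (h2.trans h)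

lemma aux2 {u : ℕ → ℂ} {c : ℂ} (hc : ‖c‖ = 1) (hu : Summable u) (h1 : ∀ n, ‖u n‖ < 1) :
    Multipliable (fun n => 1 - c * u n) ∧ (∏' n, (1 - c * u n)) ≠ 0 :=
  aux_mult_ne (hu.mul_left c) (fun n => by rw [norm_mul, hc, one_mul]; exact h1 n)

lemma aux_finprod {ι : Type*} (s : Finset ι) (h : ι → ℕ → ℂ)
    (hm : ∀ i ∈ s, Multipliable (h i) ∧ (∏' n, h i n) ≠ 0) :
    Multipliable (fun n => ∏ i ∈ s, h i n) ∧ (∏' n, ∏ i ∈ s, h i n) ≠ 0 := by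
  classical
  induction s using Finset.induction_on with
  | empty => exact ⟨by simpa using multipliable_one, by simp⟩
  | insert a s hnotmem ih =>
    simp only [Finset.prod_insert hnotmem]
    obtain ⟨hma, hna⟩ := hm a (Finset.mem_insert_self a s)
    obtain ⟨hmb, hnb⟩ := ih (fun i hi => hm i (Finset.mem_insert_of_mem hi))
    exact ⟨hma.mul hmb, by rw [Multipliable.tprod_mul hma hmb]; exact mul_ne_zero hna hnb⟩

/-- auxiliary factor -/
def Gfac (lam : Fin 12 → ℂ) (x : ℂ) : ℂ := ∏ i, (1 - (lam i)⁻¹ * x) * (1 - lam i * x)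

lemma auxG (lam : Fin 12 → ℂ) (hlam : ∀ i, ‖lam i‖ = 1) {u : ℕ → ℂ}
    (hu : Summable u) (h1 : ∀ n, ‖u n‖ < 1) :
    Multipliable (fun n => Gfac lam (u n)) ∧ (∏' n, Gfac lam (u n)) ≠ 0 := by
  apply aux_finprod
  intro i _
  have hc1 : ‖lam i‖ = 1 := by exact hlam i
  have hc2 : ‖(lam i)⁻¹‖ = 1 := by rw [norm_inv, hc1]; norm_num
  obtain ⟨m1, n1⟩ := aux2 hc2 hu h1
  obtain ⟨m2, n2⟩ := aux2 hc1 hu h1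
  exact ⟨m1.mul m2, by rw [Multipliable.tprod_mul m1 m2]; exact mul_ne_zero n1 n2⟩

lemma qq_half (τ : ℂ) : qq (τ + 1/2) = -qq τ := by
  unfold qq twoPiI
  rw [show 2*(Real.pi:ℂ)*I*(τ+1/2) = 2*Real.pi*I*τ + Real.pi*I by ring, Complex.exp_add,
    Complex.exp_pi_mul_I]
  ring

lemma qq_two (σ : ℂ) : qq (2*σ) = qq σ^2 := by
  unfold qq
  rw [show twoPiI*(2*σ) = twoPiI*σ + twoPiI*σ by ring, Complex.exp_add]
  ring

lemma qq_double_half (τ : ℂ) : qq (2*(τ+1/2)) = qq τ^2 := by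
  unfold qq twoPiI
  rw [show 2*(Real.pi:ℂ)*I*(2*(τ+1/2)) = (2*Real.pi*I*τ + 2*Real.pi*I*τ) + 2*Real.pi*I by ring,
    Complex.exp_add, Complex.exp_add, Complex.exp_two_pi_mul_I]
  ring

lemma etaG12_eq (lam : Fin 12 → ℂ) (σ : ℂ) :
    etaG12 lam σ = qq σ * ∏' n : ℕ, Gfac lam (qq σ ^ (n+1)) := rfl

lemma etaG12neg_eq (lam : Fin 12 → ℂ) (σ : ℂ) :
    etaG12neg lam σ = qq σ * ∏' n : ℕ, Gfac lam (-(qq σ ^ (n+1))) := by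
  unfold etaG12neg Gfac
  congr 1
  exact tprod_congr fun n => Finset.prod_congr rfl fun i _ => by ring

/-- `t_g(τ + 1/2) = −t_{-g}(τ)`. -/
theorem tg_shift_half (lam : Fin 12 → ℂ) (hlam : ∀ i, ‖lam i‖ = 1) :
    ∀ τ : ℂ, 0 < τ.im → tg12 lam (τ + 1 / 2) = -tg12neg lam τ := by
  intro τ hτ
  have hqlt : ‖qq τ‖ < 1 := by
    rw [qq, Complex.norm_exp]
    have hre : (twoPiI * τ).re = -(2*Real.pi*τ.im) := by
      simp [twoPiI, Complex.mul_re, Complex.mul_im]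
    rw [hre, Real.exp_lt_one_iff]
    nlinarith [Real.pi_pos]
  have hq0 : qq τ ≠ 0 := Complex.exp_ne_zero _
  set q := qq τ with hq
  have hb : ∀ e : ℕ, e ≠ 0 → ‖q ^ e‖ < 1 := fun e he => by
    rw [norm_pow]; exact pow_lt_one₀ (norm_nonneg _) hqlt he
  have hs : ∀ b : ℕ, Summable (fun n : ℕ => q^(2*n+(b+1))) := by
    intro b
    have h2 : ‖q^2‖ < 1 := hb 2 two_ne_zero
    have := (summable_geometric_of_norm_lt_one h2).mul_right (q^(b+1))
    exact this.congr fun n => by rw [← pow_mul, ← pow_add]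
  have hs1 : Summable (fun k : ℕ => -(q^(2*k+1))) := (hs 0).neg
  have hs2 : Summable (fun k : ℕ => q^(2*k+2)) := hs 1
  have hs3 : Summable (fun k : ℕ => -(q^(2*k+2))) := (hs 1).neg
  obtain ⟨mA, nA⟩ := auxG lam hlam hs1 (fun n => by rw [norm_neg]; exact hb _ (by omega))
  obtain ⟨mB, nB⟩ := auxG lam hlam hs2 (fun n => hb _ (by omega))
  obtain ⟨mC, nC⟩ := auxG lam hlam hs3 (fun n => by rw [norm_neg]; exact hb _ (by omega))
  set A := ∏' k : ℕ, Gfac lam (-(q^(2*k+1))) with hA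
  set B := ∏' k : ℕ, Gfac lam (q^(2*k+2)) with hB
  set C := ∏' k : ℕ, Gfac lam (-(q^(2*k+2))) with hC
  -- split of the (-q)-product
  have hme : Multipliable fun k : ℕ => Gfac lam ((-q)^(2*k+1)) :=
    mA.congr fun k => by rw [Odd.neg_pow ⟨k, by ring⟩]
  have hmo : Multipliable fun k : ℕ => Gfac lam ((-q)^(2*k+1+1)) :=
    mB.congr fun k => by rw [show 2*k+1+1 = 2*k+2 from rfl, Even.neg_pow ⟨k+1, by ring⟩]
  have key1 : (∏' n : ℕ, Gfac lam ((-q)^(n+1))) = A * B := by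
    rw [← tprod_even_mul_odd (f := fun n => Gfac lam ((-q)^(n+1))) hme hmo]
    congr 1
    · exact tprod_congr fun k => by rw [Odd.neg_pow ⟨k, by ring⟩]
    · exact tprod_congr fun k => by
        rw [show 2*k+1+1 = 2*k+2 from rfl, Even.neg_pow ⟨k+1, by ring⟩]
  have hmo2 : Multipliable fun k : ℕ => Gfac lam (-(q^(2*k+1+1))) :=
    mC.congr fun k => by rw [show 2*k+1+1 = 2*k+2 from rfl]
  have key2 : (∏' n : ℕ, Gfac lam (-(q^(n+1)))) = A * C := by
    rw [← tprod_even_mul_odd (f := fun n => Gfac lam (-(q^(n+1)))) mA hmo2]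
  have key3 : (∏' n : ℕ, Gfac lam ((q^2)^(n+1))) = B :=
    tprod_congr fun n => by rw [← pow_mul, show 2*(n+1) = 2*n+2 by ring]
  have key4 : (∏' n : ℕ, Gfac lam (-((q^2)^(n+1)))) = C :=
    tprod_congr fun n => by rw [← pow_mul, show 2*(n+1) = 2*n+2 by ring]
  have e1 : etaG12 lam (τ+1/2) = -q * (A*B) := by
    rw [etaG12_eq, qq_half, key1]
  have e2 : etaG12 lam (2*(τ+1/2)) = q^2 * B := by
    rw [etaG12_eq, qq_double_half, ← hq, key3]
  have e3 : etaG12neg lam τ = q * (A*C) := by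
    rw [etaG12neg_eq, ← hq, key2]
  have e4 : etaG12neg lam (2*τ) = q^2 * C := by
    rw [etaG12neg_eq, qq_two, ← hq, key4]
  rw [tg12, tg12neg, e1, e2, e3, e4, neg_div']
  rw [div_eq_div_iff (mul_ne_zero (pow_ne_zero 2 hq0) nB) (mul_ne_zero (pow_ne_zero 2 hq0) nC)]
  ring
end
end

section
/- Let d ∈ {2,4,6,8,10,12}. Let λ_1, …, λ_{12−d} be complex numbers of modulus 1 and let χ, C ∈ ℂ. Assume the eta-product identity 2χ + η_g(τ/2)/η_g(τ) − η_{-g}(τ/2)/η_{-g}(τ) + C·η_{-g}(τ) = 0 holds for all τ ∈ ℍ. For integers j ≥ 0 define F_{2j}(τ) = −Λ_2(τ/2)^j·(η_g(τ/2)/η_g(τ)) + Λ_2(τ/2+1/2)^j·(η_{-g}(τ/2)/η_{-g}(τ)) − (−2Λ_2(τ))^j·C·η_{-g}(τ), set t_g(τ) = η_g(τ)/η_g(2τ), and set G_{2j}(σ) = −Λ_2(σ)^j + (−2Λ_2(2σ))^j. Then for every integer j ≥ 0 and all τ ∈ ℍ one has F_{2j}(τ) = 2χ·(−2Λ_2(τ))^j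 + t_g(τ/2)·G_{2j}(τ/2) + t_g((τ+1)/2)·G_{2j}((τ+1)/2); in particular F_0(τ) = 2χ is constant. -/
noncomputable section

open Complex

/-- `η_g(τ) = q·∏_{n≥1}[(1−qⁿ)^{2d}·∏_{i=1}^{12−d}(1−λᵢ⁻¹qⁿ)(1−λᵢqⁿ)]`. -/
def etaGd (d : ℕ) (lam : Fin (12 - d) → ℂ) (τ : ℂ) : ℂ :=
  qq τ * ∏' n : ℕ, ((1 - qq τ ^ (n + 1)) ^ (2 * d) *
    ∏ i, ((1 - (lam i)⁻¹ * qq τ ^ (n + 1)) * (1 - lam i * qq τ ^ (n + 1))))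

/-- `η_{-g}(τ) = q·∏_{n≥1}[(1+qⁿ)^{2d}·∏_{i=1}^{12−d}(1+λᵢ⁻¹qⁿ)(1+λᵢqⁿ)]`. -/
def etaGdneg (d : ℕ) (lam : Fin (12 - d) → ℂ) (τ : ℂ) : ℂ :=
  qq τ * ∏' n : ℕ, ((1 + qq τ ^ (n + 1)) ^ (2 * d) *
    ∏ i, ((1 + (lam i)⁻¹ * qq τ ^ (n + 1)) * (1 + lam i * qq τ ^ (n + 1))))

/-- The twining genus `Φ^{(ℓ)} = φ_g^{(ℓ)}` with `ℓ = d/2 + 1`, built from `η_g`, `η_{-g}`,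
the theta quotients, and the constants `C = C_{-g}` and `D = D_g^{(ℓ)}`. -/
def PhiL (d : ℕ) (lam : Fin (12 - d) → ℂ) (C D : ℂ) (τ z : ℂ) : ℂ :=
  -(1 / 2) * ((th4 τ z ^ d / th4 τ 0 ^ d) * (etaGd d lam (τ / 2) / etaGd d lam τ)
            - (th3 τ z ^ d / th3 τ 0 ^ d) * (etaGdneg d lam (τ / 2) / etaGdneg d lam τ))
  + 1 / 2 * ((-1 : ℂ) ^ (d / 2 + 1) * (th1 τ z ^ d / etaF τ ^ (3 * d)) * D * etaGd d lam τ
           - (th2 τ z ^ d / th2 τ 0 ^ d) * C * etaGdneg d lam τ)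

/-- `F_{2j} = F_{2j,g}`, as in equation (10.4). -/
def F2j (d : ℕ) (lam : Fin (12 - d) → ℂ) (C : ℂ) (j : ℕ) (τ : ℂ) : ℂ :=
  -(Lam 2 (τ / 2)) ^ j * (etaGd d lam (τ / 2) / etaGd d lam τ)
  + (Lam 2 (τ / 2 + 1 / 2)) ^ j * (etaGdneg d lam (τ / 2) / etaGdneg d lam τ)
  - (-2 * Lam 2 τ) ^ j * C * etaGdneg d lam τ

/-- `t_g(τ) = η_g(τ)/η_g(2τ)`. -/
def tgd (d : ℕ) (lam : Fin (12 - d) → ℂ) (τ : ℂ) : ℂ := etaGd d lam τ / etaGd d lam (2 * τ)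

/-- `G_{2j}(σ) = −Λ₂(σ)ʲ + (−2Λ₂(2σ))ʲ`. -/
def G2j (j : ℕ) (σ : ℂ) : ℂ := -(Lam 2 σ) ^ j + (-2 * Lam 2 (2 * σ)) ^ j

lemma basic_aux (c q : ℂ) (hq : ‖q‖ < 1) (hcq : ‖c * q‖ < 1) :
    Multipliable (fun n : ℕ => 1 + c * q ^ (n + 1)) ∧
      (∏' n : ℕ, (1 + c * q ^ (n + 1))) ≠ 0 := by
  have hnorm : ∀ n : ℕ, ‖c * q ^ (n + 1)‖ = ‖c * q‖ * ‖q‖ ^ n := by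
    intro n
    rw [show c * q ^ (n + 1) = (c * q) * q ^ n by ring, norm_mul, norm_pow]
  have hle : ∀ n : ℕ, ‖c * q ^ (n + 1)‖ ≤ ‖c * q‖ := by
    intro n
    rw [hnorm n]
    exact mul_le_of_le_one_right (norm_nonneg _) (pow_le_one₀ (norm_nonneg q) hq.le)
  have hlt : ∀ n, ‖c * q ^ (n + 1)‖ < 1 := fun n => lt_of_le_of_lt (hle n) hcq
  have hne : ∀ n : ℕ, 1 + c * q ^ (n + 1) ≠ 0 := by
    intro n h
    have h1 : c * q ^ (n + 1) = -1 := by linear_combination h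
    have h2 := hlt n
    rw [h1] at h2
    simp at h2
  have hsum : Summable (fun n : ℕ => Complex.log (1 + c * q ^ (n + 1))) := by
    have hcq0 : (0:ℝ) ≤ ‖c * q‖ := norm_nonneg _
    have h1r : (0:ℝ) < 1 - ‖c * q‖ := by linarith
    have h1ri : (0:ℝ) ≤ (1 - ‖c * q‖)⁻¹ := le_of_lt (inv_pos.2 h1r)
    have hgeo : Summable (fun n : ℕ =>
        (‖c * q‖ ^ 2 * (1 - ‖c * q‖)⁻¹ / 2 + ‖c * q‖) * ‖q‖ ^ n) :=
      (summable_geometric_of_lt_one (norm_nonneg q) hq).mul_left _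
    have hbound : ∀ n : ℕ, ‖Complex.log (1 + c * q ^ (n + 1))‖ ≤
        (‖c * q‖ ^ 2 * (1 - ‖c * q‖)⁻¹ / 2 + ‖c * q‖) * ‖q‖ ^ n := by
      intro n
      have hs0 : (0:ℝ) ≤ ‖q‖ ^ n := pow_nonneg (norm_nonneg _) n
      have hs1 : ‖q‖ ^ n ≤ 1 := pow_le_one₀ (norm_nonneg q) hq.le
      have hi : (1 - ‖c * q ^ (n + 1)‖)⁻¹ ≤ (1 - ‖c * q‖)⁻¹ := by
        apply inv_anti₀ h1r
        have := hle n
        linarith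
      calc ‖Complex.log (1 + c * q ^ (n + 1))‖
          ≤ ‖c * q ^ (n + 1)‖ ^ 2 * (1 - ‖c * q ^ (n + 1)‖)⁻¹ / 2 + ‖c * q ^ (n + 1)‖ :=
            Complex.norm_log_one_add_le (hlt n)
        _ ≤ ‖c * q ^ (n + 1)‖ ^ 2 * (1 - ‖c * q‖)⁻¹ / 2 + ‖c * q ^ (n + 1)‖ := by gcongr
        _ ≤ (‖c * q‖ ^ 2 * (1 - ‖c * q‖)⁻¹ / 2 + ‖c * q‖) * ‖q‖ ^ n := by
            rw [hnorm n]
            have hKnn : (0:ℝ) ≤ ‖c * q‖ ^ 2 * (1 - ‖c * q‖)⁻¹ / 2 := by positivity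
            have hss : (‖q‖ ^ n) ^ 2 ≤ ‖q‖ ^ n := by nlinarith
            nlinarith [mul_le_mul_of_nonneg_left hss hKnn]
    exact Summable.of_norm (Summable.of_nonneg_of_le (fun n => norm_nonneg _) hbound hgeo)
  have hm := Complex.multipliable_of_summable_log hsum
  refine ⟨hm, ?_⟩
  have h3 := Complex.cexp_tsum_eq_tprod hne hsum
  rw [← h3]
  exact Complex.exp_ne_zero _

lemma pow_aux (f : ℕ → ℂ) (hf : Multipliable f) (k : ℕ) :
    Multipliable (fun n => f n ^ k) ∧ (∏' n, f n ^ k) = (∏' n, f n) ^ k := by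
  induction k with
  | zero => simp only [pow_zero]; exact ⟨multipliable_one, tprod_one⟩
  | succ k ih =>
      simp only [pow_succ]
      exact ⟨ih.1.mul hf, by rw [Multipliable.tprod_mul ih.1 hf, ih.2]⟩

lemma prod_aux {ι : Type*} [DecidableEq ι] (s : Finset ι) (f : ι → ℕ → ℂ)
    (h : ∀ i ∈ s, Multipliable (f i)) :
    Multipliable (fun n => ∏ i ∈ s, f i n) ∧
      (∏' n, ∏ i ∈ s, f i n) = ∏ i ∈ s, ∏' n, f i n := by
  induction s using Finset.induction_on with
  | empty => simp only [Finset.prod_empty]; exact ⟨multipliable_one, tprod_one⟩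
  | insert a s ha ih =>
      have h1 : Multipliable (f a) := h a (Finset.mem_insert_self a s)
      have h2 := ih (fun i hi => h i (Finset.mem_insert_of_mem hi))
      simp only [Finset.prod_insert ha]
      exact ⟨h1.mul h2.1, by rw [Multipliable.tprod_mul h1 h2.1, h2.2]⟩

/-- The general term family. -/
def EE (d : ℕ) (lam : Fin (12 - d) → ℂ) (ε q : ℂ) (n : ℕ) : ℂ :=
  (1 + ε * q ^ (n + 1)) ^ (2 * d) *
    ∏ i, ((1 + (lam i)⁻¹ * (ε * q ^ (n + 1))) * (1 + lam i * (ε * q ^ (n + 1))))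

section EEfacts
variable (d : ℕ) (lam : Fin (12 - d) → ℂ) (hlam : ∀ i, ‖lam i‖ = 1)

include hlam in
lemma norm_lam (i : Fin (12 - d)) : ‖lam i‖ = 1 := by
  exact hlam i

include hlam in
lemma EE_mult_ne (ε q : ℂ) (hq : ‖q‖ < 1) (hεq : ‖ε * q‖ < 1) :
    Multipliable (EE d lam ε q) ∧ (∏' n, EE d lam ε q n) ≠ 0 := by
  have hres : ∀ i : Fin (12 - d),
      (Multipliable (fun n : ℕ => 1 + (lam i)⁻¹ * (ε * q ^ (n + 1))) ∧
        (∏' n : ℕ, (1 + (lam i)⁻¹ * (ε * q ^ (n + 1)))) ≠ 0) ∧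
      (Multipliable (fun n : ℕ => 1 + lam i * (ε * q ^ (n + 1))) ∧
        (∏' n : ℕ, (1 + lam i * (ε * q ^ (n + 1)))) ≠ 0) := by
    intro i
    have hn1 : ‖(lam i)⁻¹ * ε * q‖ < 1 := by
      rw [mul_assoc, norm_mul, norm_inv, norm_lam d lam hlam i, inv_one, one_mul]
      exact hεq
    have hn2 : ‖lam i * ε * q‖ < 1 := by
      rw [mul_assoc, norm_mul, norm_lam d lam hlam i, one_mul]
      exact hεq
    have b1 := basic_aux ((lam i)⁻¹ * ε) q hq hn1
    have b2 := basic_aux (lam i * ε) q hq hn2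
    have e1 : ∀ n : ℕ, 1 + (lam i)⁻¹ * ε * q ^ (n + 1) = 1 + (lam i)⁻¹ * (ε * q ^ (n + 1)) := by
      intro n; ring
    have e2 : ∀ n : ℕ, 1 + lam i * ε * q ^ (n + 1) = 1 + lam i * (ε * q ^ (n + 1)) := by
      intro n; ring
    refine ⟨⟨b1.1.congr e1, ?_⟩, ⟨b2.1.congr e2, ?_⟩⟩
    · rw [← tprod_congr e1]; exact b1.2
    · rw [← tprod_congr e2]; exact b2.2
  have b0 := basic_aux ε q hq hεq
  have hpow := pow_aux _ b0.1 (2 * d)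
  have hpair : ∀ i : Fin (12 - d), Multipliable (fun n : ℕ =>
      (1 + (lam i)⁻¹ * (ε * q ^ (n + 1))) * (1 + lam i * (ε * q ^ (n + 1)))) :=
    fun i => ((hres i).1.1).mul ((hres i).2.1)
  have hprod := prod_aux (Finset.univ : Finset (Fin (12 - d)))
    (fun i n => (1 + (lam i)⁻¹ * (ε * q ^ (n + 1))) * (1 + lam i * (ε * q ^ (n + 1))))
    (fun i _ => hpair i)
  constructor
  · exact hpow.1.mul hprod.1
  · rw [show (fun n => EE d lam ε q n) = EE d lam ε q from rfl]
    unfold EE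
    rw [Multipliable.tprod_mul hpow.1 hprod.1, hpow.2, hprod.2]
    apply mul_ne_zero
    · exact pow_ne_zero _ b0.2
    · rw [Finset.prod_ne_zero_iff]
      intro i _
      rw [Multipliable.tprod_mul (hres i).1.1 (hres i).2.1]
      exact mul_ne_zero (hres i).1.2 (hres i).2.2
end EEfacts

section S
variable (d : ℕ) (lam : Fin (12 - d) → ℂ) (hlam : ∀ i, ‖lam i‖ = 1)

lemma EE_even (ε q : ℂ) (hq0 : q ≠ 0) (k : ℕ) :
    EE d lam ε q (2 * k) = EE d lam (ε * q⁻¹) (q ^ 2) k := by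
  unfold EE
  have h : ε * q ^ (2 * k + 1) = ε * q⁻¹ * (q ^ 2) ^ (k + 1) := by
    field_simp
    ring
  simp only [h]

lemma EE_odd (ε q : ℂ) (k : ℕ) :
    EE d lam ε q (2 * k + 1) = EE d lam ε (q ^ 2) k := by
  unfold EE
  have h : ε * q ^ (2 * k + 1 + 1) = ε * (q ^ 2) ^ (k + 1) := by ring
  simp only [h]

include hlam in
lemma tprod_EE_split (ε q : ℂ) (hq : ‖q‖ < 1) (hq0 : q ≠ 0) (hεq : ‖ε * q‖ < 1) :
    ∏' n, EE d lam ε q n =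
      (∏' k, EE d lam (ε * q⁻¹) (q ^ 2) k) * (∏' k, EE d lam ε (q ^ 2) k) := by
  have hq2 : ‖q ^ 2‖ < 1 := by
    rw [norm_pow]
    nlinarith [norm_nonneg q]
  have hεq2 : ‖ε * q⁻¹ * q ^ 2‖ < 1 := by
    rw [show ε * q⁻¹ * q ^ 2 = ε * q from by field_simp]
    exact hεq
  have hεq2' : ‖ε * q ^ 2‖ < 1 := by
    rw [show ε * q ^ 2 = (ε * q) * q from by ring, norm_mul]
    calc ‖ε * q‖ * ‖q‖ ≤ ‖ε * q‖ * 1 := by gcongr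
      _ = ‖ε * q‖ := mul_one _
      _ < 1 := hεq
  have hme : Multipliable (fun k => EE d lam ε q (2 * k)) :=
    ((EE_mult_ne d lam hlam (ε * q⁻¹) (q ^ 2) hq2 hεq2).1).congr
      (fun k => (EE_even d lam ε q hq0 k).symm)
  have hmo : Multipliable (fun k => EE d lam ε q (2 * k + 1)) :=
    ((EE_mult_ne d lam hlam ε (q ^ 2) hq2 hεq2').1).congr
      (fun k => (EE_odd d lam ε q k).symm)
  rw [← tprod_even_mul_odd hme hmo]
  congr 1
  · exact tprod_congr (fun k => EE_even d lam ε q hq0 k)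
  · exact tprod_congr (fun k => EE_odd d lam ε q k)

include hlam in
lemma K_identity (p : ℂ) (hp : ‖p‖ < 1) (hp0 : p ≠ 0) :
    (∏' n, EE d lam (-1) (-p) n) * (∏' n, EE d lam 1 (p ^ 2) n) =
      (∏' n, EE d lam 1 p n) * (∏' n, EE d lam (-1) (p ^ 2) n) := by
  have hnp : ‖-p‖ < 1 := by rwa [norm_neg]
  have hnp0 : -p ≠ 0 := neg_ne_zero.2 hp0
  have h1 : ‖(-1 : ℂ) * -p‖ < 1 := by
    rw [show (-1 : ℂ) * -p = p from by ring]
    exact hp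
  have h2 : ‖(1 : ℂ) * p‖ < 1 := by rwa [one_mul]
  have hs1 := tprod_EE_split d lam hlam (-1) (-p) hnp hnp0 h1
  have hs2 := tprod_EE_split d lam hlam 1 p hp hp0 h2
  rw [show (-1 : ℂ) * (-p)⁻¹ = 1 * p⁻¹ from by rw [inv_neg]; ring] at hs1
  rw [show (-p : ℂ) ^ 2 = p ^ 2 from by ring] at hs1
  rw [hs1, hs2]
  ring
end S

-- qq facts
lemma qq_ne_zero (τ : ℂ) : qq τ ≠ 0 := Complex.exp_ne_zero _

lemma qq_norm_lt_one {τ : ℂ} (hτ : 0 < τ.im) : ‖qq τ‖ < 1 := by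
  rw [qq, Complex.norm_exp]
  rw [Real.exp_lt_one_iff]
  have : (twoPiI * τ).re = -(2 * Real.pi * τ.im) := by
    simp [twoPiI, Complex.mul_re, Complex.mul_im]
  rw [this]
  have := Real.pi_pos
  nlinarith

lemma qq_add_one (τ : ℂ) : qq (τ + 1) = qq τ := by
  rw [qq, qq, show twoPiI * (τ + 1) = twoPiI * τ + 2 * Real.pi * I from by rw [twoPiI]; ring,
    Complex.exp_add, Complex.exp_two_pi_mul_I, mul_one]

lemma qq_sq (τ : ℂ) : qq τ = qq (τ / 2) ^ 2 := by
  rw [qq, qq, sq, ← Complex.exp_add]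
  congr 1
  ring

lemma qq_half_shift (τ : ℂ) : qq ((τ + 1) / 2) = -qq (τ / 2) := by
  rw [qq, qq, show twoPiI * ((τ + 1) / 2) = twoPiI * (τ / 2) + Real.pi * I from by
    rw [twoPiI]; ring, Complex.exp_add, Complex.exp_pi_mul_I]
  ring

-- eta in EE form
lemma etaGd_eq (d : ℕ) (lam : Fin (12 - d) → ℂ) (τ : ℂ) :
    etaGd d lam τ = qq τ * ∏' n, EE d lam (-1) (qq τ) n := by
  unfold etaGd
  congr 1
  apply tprod_congr
  intro n
  unfold EE
  congr 1
  · congr 1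
    ring
  · exact Finset.prod_congr rfl fun i _ => by ring

lemma etaGdneg_eq (d : ℕ) (lam : Fin (12 - d) → ℂ) (τ : ℂ) :
    etaGdneg d lam τ = qq τ * ∏' n, EE d lam 1 (qq τ) n := by
  unfold etaGdneg
  congr 1
  apply tprod_congr
  intro n
  unfold EE
  congr 1
  · congr 1
    ring
  · exact Finset.prod_congr rfl fun i _ => by ring

section Main
variable (d : ℕ) (lam : Fin (12 - d) → ℂ) (hlam : ∀ i, ‖lam i‖ = 1)

include hlam in
lemma etaGd_ne_zero {τ : ℂ} (hτ : 0 < τ.im) : etaGd d lam τ ≠ 0 := by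
  rw [etaGd_eq]
  refine mul_ne_zero (qq_ne_zero τ) ?_
  refine (EE_mult_ne d lam hlam (-1) (qq τ) (qq_norm_lt_one hτ) ?_).2
  rw [show (-1 : ℂ) * qq τ = -qq τ from by ring, norm_neg]
  exact qq_norm_lt_one hτ

include hlam in
lemma etaGdneg_ne_zero {τ : ℂ} (hτ : 0 < τ.im) : etaGdneg d lam τ ≠ 0 := by
  rw [etaGdneg_eq]
  refine mul_ne_zero (qq_ne_zero τ) ?_
  refine (EE_mult_ne d lam hlam 1 (qq τ) (qq_norm_lt_one hτ) ?_).2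
  rw [one_mul]
  exact qq_norm_lt_one hτ

lemma etaGd_periodic (τ : ℂ) : etaGd d lam (τ + 1) = etaGd d lam τ := by
  unfold etaGd
  simp only [qq_add_one]

include hlam in
lemma etaK {τ : ℂ} (hτ : 0 < τ.im) :
    etaGd d lam ((τ + 1) / 2) * etaGdneg d lam τ =
      -(etaGdneg d lam (τ / 2) * etaGd d lam τ) := by
  have hτ2 : 0 < (τ / 2).im := by
    rw [Complex.div_ofNat_im]
    positivity
  set p := qq (τ / 2) with hp
  have hpn : ‖p‖ < 1 := qq_norm_lt_one hτ2
  have hp0 : p ≠ 0 := qq_ne_zero _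
  rw [etaGd_eq, etaGdneg_eq, etaGdneg_eq, etaGd_eq, qq_half_shift, qq_sq τ, ← hp]
  have hK := K_identity d lam hlam p hpn hp0
  linear_combination (p ^ 2 * -p) * hK

end Main

-- E2 and Lam periodicity
lemma E2_periodic (τ : ℂ) : E2 (τ + 1) = E2 τ := by
  unfold E2
  simp only [qq_add_one]

lemma Lam2_periodic (τ : ℂ) : Lam 2 (τ + 1) = Lam 2 τ := by
  unfold Lam
  rw [E2_periodic, show (2 : ℕ) * (τ + 1) = ((2 * τ + 1) + 1 : ℂ) from by push_cast; ring,
    E2_periodic, show (2 * τ + 1 : ℂ) = (2 * τ) + 1 from by ring, E2_periodic]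
  norm_num

/-- Assuming the eta-product identity, each `F_{2j}` is a Hecke-type combination of `t_g`
and `G_{2j}`; in particular `F₀ = 2χ` is constant. -/
theorem F2j_Hecke_expression (d : ℕ) (hd : d ∈ ({2, 4, 6, 8, 10, 12} : Set ℕ))
    (lam : Fin (12 - d) → ℂ) (hlam : ∀ i, ‖lam i‖ = 1) (chi C : ℂ)
    (hid : ∀ τ : ℂ, 0 < τ.im →
      2 * chi + etaGd d lam (τ / 2) / etaGd d lam τ
        - etaGdneg d lam (τ / 2) / etaGdneg d lam τ + C * etaGdneg d lam τ = 0) :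
    (∀ j : ℕ, ∀ τ : ℂ, 0 < τ.im →
      F2j d lam C j τ
        = 2 * chi * (-2 * Lam 2 τ) ^ j
          + tgd d lam (τ / 2) * G2j j (τ / 2)
          + tgd d lam ((τ + 1) / 2) * G2j j ((τ + 1) / 2)) ∧
    (∀ τ : ℂ, 0 < τ.im → F2j d lam C 0 τ = 2 * chi) := by
  have main : ∀ j : ℕ, ∀ τ : ℂ, 0 < τ.im →
      F2j d lam C j τ
        = 2 * chi * (-2 * Lam 2 τ) ^ j
          + tgd d lam (τ / 2) * G2j j (τ / 2)
          + tgd d lam ((τ + 1) / 2) * G2j j ((τ + 1) / 2) := by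
    intro j τ hτ
    have hEg : etaGd d lam τ ≠ 0 := etaGd_ne_zero d lam hlam hτ
    have hEn : etaGdneg d lam τ ≠ 0 := etaGdneg_ne_zero d lam hlam hτ
    have hK := etaK d lam hlam hτ
    have e1 : (2 : ℂ) * ((τ + 1) / 2) = τ + 1 := by ring
    have e2 : (2 : ℂ) * (τ / 2) = τ := by ring
    have e3 : (τ + 1) / 2 = τ / 2 + 1 / 2 := by ring
    have hper := etaGd_periodic d lam τ
    have hL := Lam2_periodic τ
    have hT : tgd d lam ((τ + 1) / 2)
        = -(etaGdneg d lam (τ / 2) / etaGdneg d lam τ) := by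
      unfold tgd
      rw [e1, hper]
      field_simp
      linear_combination hK
    have htg : tgd d lam (τ / 2) = etaGd d lam (τ / 2) / etaGd d lam τ := by
      unfold tgd
      rw [e2]
    unfold F2j G2j
    rw [htg] at *
    rw [hT, e1, e2, hL, e3]
    linear_combination (-(-2 * Lam 2 τ) ^ j) * hid τ hτ
  refine ⟨main, fun τ hτ => ?_⟩
  have h := main 0 τ hτ
  simpa [G2j] using h
end
end
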